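/- If S is an n×n row-stochastic matrix with all entries strictly positive, then 1 is an eigenvalue of S of algebraic multiplicity 1, and every other eigenvalue λ satisfies |λ| < 1. -/

import Mathlib

open Matrix Polynomial Finset


lemma det_as_rows {N : ℕ} {R : Type*} [CommRing R] (M : Matrix (Fin N) (Fin N) R) :
    M.det = ∑ σ : Equiv.Perm (Fin N), ((Equiv.Perm.sign σ : ℤ) : R) * ∏ i : Fin N, M i (σ i) := by
  conv_lhs => rw [← Matrix.det_transpose M, Matrix.det_apply']
  simp [Matrix.transpose_apply]

lemma my_derivative_det {N : ℕ} {R : Type*} [CommRing R] (M : Matrix (Fin N) (Fin N) R[X]) :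
    derivative M.det
      = ∑ i : Fin N, (M.updateRow i (fun j => derivative (M i j))).det := by
  rw [det_as_rows, map_sum]
  simp only [det_as_rows]
  rw [Finset.sum_comm]
  refine Finset.sum_congr rfl fun σ _ => ?_
  rw [derivative_mul]
  have hc : derivative (((Equiv.Perm.sign σ : ℤ) : R[X])) = 0 := by simp
  rw [hc, zero_mul, zero_add]
  rw [Finset.prod_eq_multiset_prod, Polynomial.derivative_prod, ← Finset.mul_sum]
  congr 1
  rw [Finset.sum_eq_multiset_sum]
  congr 1
  apply Multiset.map_congr rfl
  intro i _

  have h1 : (Multiset.map (fun k => M k (σ k)) (univ.val.erase i)).prod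
      = ∏ k ∈ univ.erase i, M k (σ k) := by
    rw [Finset.prod_eq_multiset_prod, Finset.erase_val]
  rw [h1]
  rw [← Finset.mul_prod_erase univ (fun k => (M.updateRow i fun j => derivative (M i j)) k (σ k))
      (Finset.mem_univ i)]
  rw [Matrix.updateRow_self, mul_comm]
  congr 1
  apply Finset.prod_congr rfl
  intro k hk
  rw [Matrix.updateRow_apply, if_neg (Finset.mem_erase.mp hk).1]

lemma eval_det_eq {N : ℕ} {R : Type*} [CommRing R] (M : Matrix (Fin N) (Fin N) R[X]) (x : R) :
    M.det.eval x = (M.map (eval x)).det := by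
  rw [← Polynomial.coe_evalRingHom, RingHom.map_det]
  rfl

lemma deriv_charpoly_eval {N : ℕ} (S : Matrix (Fin N) (Fin N) ℝ) :
    (derivative S.charpoly).eval 1
      = ∑ i, ((1 - S).updateRow i (Pi.single i 1)).det := by
  rw [Matrix.charpoly, my_derivative_det, Polynomial.eval_finset_sum]
  refine Finset.sum_congr rfl fun i _ => ?_
  rw [eval_det_eq]
  congr 1
  ext k j
  by_cases hk : k = i
  · subst hk
    simp only [Matrix.map_apply, Matrix.updateRow_self]
    rw [Matrix.charmatrix_apply]
    by_cases hj : j = k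
    · subst hj; simp [Pi.single_apply, Matrix.diagonal_apply]
    · simp [Pi.single_apply, Matrix.diagonal_apply, hj, Ne.symm hj]
  · simp only [Matrix.map_apply, Matrix.updateRow_apply, if_neg hk]
    rw [Matrix.charmatrix_apply]
    by_cases hj : j = k
    · subst hj; simp [Matrix.diagonal_apply, Matrix.one_apply, hk]
    · simp [Matrix.diagonal_apply, Matrix.one_apply, hj, Ne.symm hj]


lemma ker_triv {N : ℕ} (S : Matrix (Fin N) (Fin N) ℝ)
    (hpos : ∀ i j, 0 < S i j) (hrow : ∀ i, ∑ j, S i j = 1) (i : Fin N)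
    {t : ℝ} (ht0 : 0 ≤ t) (ht1 : t ≤ 1) (x : Fin N → ℝ)
    (hx : ((1 - t • S).updateRow i (Pi.single i 1)) *ᵥ x = 0) : x = 0 := by
  have hxi : x i = 0 := by
    have := congrFun hx i
    simpa [Matrix.mulVec, dotProduct, Pi.single_apply] using this
  have hrowk : ∀ k, k ≠ i → x k = t * ∑ j, S k j * x j := by
    intro k hk
    have := congrFun hx k
    simp only [Matrix.mulVec, dotProduct, Matrix.updateRow_apply, if_neg hk, Pi.zero_apply,
      Matrix.sub_apply, Matrix.one_apply, Matrix.smul_apply, smul_eq_mul, sub_mul] at this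
    have h2 : ∑ j, ((if k = j then (1:ℝ) else 0) * x j - t * S k j * x j) = 0 := this
    rw [Finset.sum_sub_distrib] at h2
    simp only [ite_mul, one_mul, zero_mul, Finset.sum_ite_eq, Finset.mem_univ, if_pos] at h2
    have h3 := sub_eq_zero.mp h2
    rw [h3, Finset.mul_sum]
    exact Finset.sum_congr rfl fun j _ => by ring
  obtain ⟨k₀, -, hmax⟩ := Finset.exists_max_image Finset.univ (fun k => |x k|) ⟨i, Finset.mem_univ i⟩
  have hmax' : ∀ k, |x k| ≤ |x k₀| := fun k => hmax k (Finset.mem_univ k)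
  by_cases hk0 : k₀ = i
  · funext k
    have := hmax' k
    rw [hk0, hxi] at this
    simpa using abs_nonpos_iff.mp (by simpa using this)
  · have hkey : |x k₀| ≤ t * (1 - S k₀ i) * |x k₀| := by
      have e1 : |x k₀| = t * |∑ j, S k₀ j * x j| := by
        rw [hrowk k₀ hk0, abs_mul, abs_of_nonneg ht0]
      refine e1.trans_le ?_
      have h1 : |∑ j, S k₀ j * x j| ≤ ∑ j, S k₀ j * |x j| := by
        refine (Finset.abs_sum_le_sum_abs _ _).trans ?_
        refine Finset.sum_le_sum fun j _ => ?_
        rw [abs_mul, abs_of_pos (hpos k₀ j)]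
      have h2 : ∑ j, S k₀ j * |x j| = ∑ j ∈ univ.erase i, S k₀ j * |x j| := by
        rw [← Finset.sum_erase_add univ _ (Finset.mem_univ i), hxi]
        simp
      have h3 : ∑ j ∈ univ.erase i, S k₀ j * |x j| ≤ ∑ j ∈ univ.erase i, S k₀ j * |x k₀| := by
        refine Finset.sum_le_sum fun j _ => ?_
        exact mul_le_mul_of_nonneg_left (hmax' j) (hpos k₀ j).le
      have h4 : ∑ j ∈ univ.erase i, S k₀ j * |x k₀| = (1 - S k₀ i) * |x k₀| := by
        rw [← Finset.sum_mul]
        congr 1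
        rw [Finset.sum_erase_eq_sub (Finset.mem_univ i), hrow k₀]
      have : t * |∑ j, S k₀ j * x j| ≤ t * ((1 - S k₀ i) * |x k₀|) := by
        refine mul_le_mul_of_nonneg_left ?_ ht0
        rw [← h4]; exact h1.trans (h2.le.trans h3)
      linarith
    have hc : t * (1 - S k₀ i) < 1 := by
      have h5 : S k₀ i < 1 := by
        have hsub : S k₀ i + S k₀ k₀ ≤ ∑ j, S k₀ j := by
          have : ({i, k₀} : Finset (Fin N)) ⊆ univ := Finset.subset_univ _
          have hpair : ∑ j ∈ ({i, k₀} : Finset (Fin N)), S k₀ j = S k₀ i + S k₀ k₀ :=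
            Finset.sum_pair (Ne.symm hk0)
          rw [← hpair]
          exact Finset.sum_le_sum_of_subset_of_nonneg this fun j _ _ => (hpos k₀ j).le
        rw [hrow k₀] at hsub
        nlinarith [hpos k₀ k₀]
      have h6 : 0 ≤ 1 - S k₀ i := by linarith
      nlinarith [hpos k₀ i]
    have : |x k₀| = 0 := by nlinarith [abs_nonneg (x k₀)]
    funext k
    have := (hmax' k).trans this.le
    simpa using abs_nonpos_iff.mp this

lemma det_minor_pos {N : ℕ} (S : Matrix (Fin N) (Fin N) ℝ)
    (hpos : ∀ i j, 0 < S i j) (hrow : ∀ i, ∑ j, S i j = 1) (i : Fin N) :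
    0 < ((1 - S).updateRow i (Pi.single i 1)).det := by
  set f : ℝ → ℝ := fun t => ((1 - t • S).updateRow i (Pi.single i 1)).det with hf
  have hcont : Continuous f := by
    apply Continuous.matrix_det
    apply continuous_matrix
    intro k j
    by_cases hk : k = i
    · subst hk
      simp only [Matrix.updateRow_self]
      exact continuous_const
    · simp only [Matrix.updateRow_apply, if_neg hk, Matrix.sub_apply, Matrix.smul_apply,
        smul_eq_mul]
      exact continuous_const.sub (continuous_id.mul continuous_const)
  have hne : ∀ t ∈ Set.Icc (0:ℝ) 1, f t ≠ 0 := by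
    intro t ht h0
    rw [hf] at h0
    obtain ⟨v, hv, hv0⟩ := Matrix.exists_mulVec_eq_zero_iff.mpr h0
    exact hv (ker_triv S hpos hrow i ht.1 ht.2 v hv0)
  have hf0 : f 0 = 1 := by
    have : ((1 : Matrix (Fin N) (Fin N) ℝ) - (0:ℝ) • S).updateRow i (Pi.single i 1)
        = (1 : Matrix (Fin N) (Fin N) ℝ) := by
      ext k j
      by_cases hk : k = i
      · subst hk
        rw [Matrix.updateRow_self]
        simp [Pi.single_apply, Matrix.one_apply, eq_comm]
      · rw [Matrix.updateRow_apply, if_neg hk]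
        simp
    rw [hf]
    simp only [this, Matrix.det_one]
  have hne1 : f 1 ≠ 0 := hne 1 (by norm_num)
  by_contra hle
  push_neg at hle
  have hf1 : f 1 = ((1 - S).updateRow i (Pi.single i 1)).det := by
    simp only [hf, one_smul]
  have hlt : f 1 < 0 := by
    rw [hf1]
    rcases lt_or_eq_of_le hle with h | h
    · exact h
    · exact absurd (hf1.trans h) hne1
  have := intermediate_value_Icc' (by norm_num : (0:ℝ) ≤ 1) hcont.continuousOn
  have h0mem : (0:ℝ) ∈ Set.Icc (f 1) (f 0) := by
    rw [hf0]; exact ⟨hlt.le, by norm_num⟩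
  obtain ⟨t, htmem, htval⟩ := this h0mem
  exact hne t htmem htval


lemma eigen_bound {N : ℕ} (S : Matrix (Fin N) (Fin N) ℝ)
    (hpos : ∀ i j, 0 < S i j) (hrow : ∀ i, ∑ j, S i j = 1)
    (μ : ℂ) (v : Fin N → ℂ) (hv : v ≠ 0)
    (heig : (S.map Complex.ofReal) *ᵥ v = μ • v) :
    ‖μ‖ ≤ 1 ∧ (‖μ‖ = 1 → μ = 1) := by
  have hNpos : 0 < N := by
    rcases Nat.eq_zero_or_pos N with h | h
    · subst h
      exact absurd (_root_.funext fun k : Fin 0 => (k.elim0 : v k = 0)) hv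
    · exact h
  obtain ⟨i₀, -, hmax⟩ := Finset.exists_max_image Finset.univ (fun k => ‖(v k)‖)
    ⟨⟨0, hNpos⟩, Finset.mem_univ _⟩
  have hmax' : ∀ k, ‖(v k)‖ ≤ ‖(v i₀)‖ := fun k => hmax k (Finset.mem_univ k)
  set r := ‖(v i₀)‖ with hrdef
  have hr : 0 < r := by
    obtain ⟨k, hk⟩ := Function.ne_iff.mp hv
    have : 0 < ‖(v k)‖ := by simpa using hk
    exact lt_of_lt_of_le this (hmax' k)
  set w := μ * v i₀ with hwdef
  have heq : ∑ j, (S i₀ j : ℂ) * v j = w := by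
    have := congrFun heig i₀
    simpa [Matrix.mulVec, dotProduct, Matrix.map_apply, Pi.smul_apply, smul_eq_mul] using this
  have habsz : ∀ j, ‖((S i₀ j : ℂ) * v j)‖ = S i₀ j * ‖(v j)‖ := by
    intro j
    rw [norm_mul, Complex.norm_real, Real.norm_eq_abs, abs_of_pos (hpos i₀ j)]
  have h1 : ‖(∑ j, (S i₀ j : ℂ) * v j)‖ ≤ ∑ j, S i₀ j * ‖(v j)‖ := by
    refine (norm_sum_le _ _).trans ?_
    exact le_of_eq (Finset.sum_congr rfl fun j _ => habsz j)
  have h2 : ∑ j, S i₀ j * ‖(v j)‖ ≤ r := by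
    have : ∑ j, S i₀ j * ‖(v j)‖ ≤ ∑ j, S i₀ j * r :=
      Finset.sum_le_sum fun j _ => mul_le_mul_of_nonneg_left (hmax' j) (hpos i₀ j).le
    rwa [← Finset.sum_mul, hrow i₀, one_mul] at this
  have habswr : ‖w‖ = ‖μ‖ * r := by
    rw [hwdef, norm_mul]
  have hle : ‖μ‖ * r ≤ r := by
    rw [← habswr, ← heq]
    exact h1.trans h2
  constructor
  · exact le_of_mul_le_mul_right (by linarith) hr
  intro habs1
  have habsw : ‖w‖ = r := by rw [habswr, habs1, one_mul]
  have hsum_eq : ∑ j, S i₀ j * ‖(v j)‖ = r := by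
    refine le_antisymm h2 ?_
    calc r = ‖w‖ := habsw.symm
      _ = ‖(∑ j, (S i₀ j : ℂ) * v j)‖ := by rw [heq]
      _ ≤ _ := h1
  have hvabs : ∀ j, ‖(v j)‖ = r := by
    have hzero : ∑ j, S i₀ j * (r - ‖(v j)‖) = 0 := by
      have h5 : ∑ j, S i₀ j * (r - ‖(v j)‖)
          = (∑ j, S i₀ j) * r - ∑ j, S i₀ j * ‖(v j)‖ := by
        rw [Finset.sum_mul, ← Finset.sum_sub_distrib]
        exact Finset.sum_congr rfl fun j _ => by ring
      rw [h5, hrow i₀, one_mul, hsum_eq, sub_self]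
    have hnn : ∀ j ∈ Finset.univ, 0 ≤ S i₀ j * (r - ‖(v j)‖) := fun j _ =>
      mul_nonneg (hpos i₀ j).le (by linarith [hmax' j])
    have h6 := (Finset.sum_eq_zero_iff_of_nonneg hnn).mp hzero
    intro j
    have hj := h6 j (Finset.mem_univ j)
    rcases mul_eq_zero.mp hj with h | h
    · exact absurd h (hpos i₀ j).ne'
    · linarith [sub_eq_zero.mp h]
  set u : Fin N → ℂ := fun j => (starRingEnd ℂ) w * ((S i₀ j : ℂ) * v j) with hudef
  have habsu : ∀ j, ‖(u j)‖ = r * (S i₀ j * r) := by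
    intro j
    rw [hudef]
    simp only [norm_mul, Complex.norm_conj]
    rw [habsw, Complex.norm_real, Real.norm_eq_abs, abs_of_pos (hpos i₀ j), hvabs j]
  have hsumu : ∑ j, u j = (Complex.normSq w : ℂ) := by
    rw [hudef, ← Finset.mul_sum, heq, mul_comm ((starRingEnd ℂ) w) w, Complex.mul_conj]
  have hre_sum : ∑ j, (u j).re = r * r := by
    have h3 : (∑ j, u j).re = ∑ j, (u j).re := Complex.re_sum _ _
    rw [hsumu] at h3
    rw [← h3]
    simp only [Complex.ofReal_re]
    rw [← Complex.sq_norm, habsw]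
    ring
  have habsu_sum : ∑ j, ‖(u j)‖ = r * r := by
    have h7 : ∑ j, ‖(u j)‖ = ∑ j, r * (S i₀ j * r) :=
      Finset.sum_congr rfl fun j _ => habsu j
    rw [h7]
    have h8 : ∑ j, r * (S i₀ j * r) = r * r * ∑ j, S i₀ j := by
      rw [Finset.mul_sum]
      exact Finset.sum_congr rfl fun j _ => by ring
    rw [h8, hrow i₀, mul_one]
  have hre_eq_abs : ∀ j, (u j).re = ‖(u j)‖ := by
    have hzero : ∑ j, (‖(u j)‖ - (u j).re) = 0 := by
      rw [Finset.sum_sub_distrib, habsu_sum, hre_sum, sub_self]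
    have hnn : ∀ j ∈ Finset.univ, 0 ≤ ‖(u j)‖ - (u j).re := fun j _ =>
      sub_nonneg.mpr (Complex.re_le_norm _)
    have h9 := (Finset.sum_eq_zero_iff_of_nonneg hnn).mp hzero
    intro j
    have := h9 j (Finset.mem_univ j)
    linarith [sub_eq_zero.mp this]
  have hureal : ∀ j, u j = ((‖(u j)‖ : ℝ) : ℂ) := by
    intro j
    have him : (u j).im = 0 := by
      have h4 := Complex.sq_norm (u j)
      rw [Complex.normSq_apply, ← hre_eq_abs j] at h4
      have : (u j).im ^ 2 = 0 := by nlinarith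
      exact pow_eq_zero_iff (by norm_num) |>.mp this
    rw [← hre_eq_abs j]
    exact Complex.ext rfl (by simp [him])
  have hwne : (starRingEnd ℂ) w ≠ 0 := by
    intro h
    have : w = 0 := by
      have := congrArg (starRingEnd ℂ) h
      simpa using this
    rw [this] at habsw
    simp at habsw
    linarith
  have hvconst : ∀ j, v j = v i₀ := by
    have key : ∀ j, (starRingEnd ℂ) w * v j = ((r * r : ℝ) : ℂ) := by
      intro j
      have h5 := hureal j
      rw [hudef] at h5
      simp only at h5
      rw [habsu j] at h5
      have hSne : ((S i₀ j : ℝ) : ℂ) ≠ 0 := by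
        simp only [ne_eq, Complex.ofReal_eq_zero]
        exact (hpos i₀ j).ne'
      apply mul_left_cancel₀ hSne
      calc ((S i₀ j : ℝ) : ℂ) * ((starRingEnd ℂ) w * v j)
          = (starRingEnd ℂ) w * ((S i₀ j : ℂ) * v j) := by ring
        _ = ((r * (S i₀ j * r) : ℝ) : ℂ) := h5
        _ = ((S i₀ j : ℝ) : ℂ) * ((r * r : ℝ) : ℂ) := by push_cast; ring
    intro j
    exact mul_left_cancel₀ hwne ((key j).trans (key i₀).symm)
  have hvi₀ne : v i₀ ≠ 0 := by
    intro h
    rw [hrdef, h] at hr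
    simp at hr
  have hfinal : w = v i₀ := by
    rw [← heq]
    have h10 : ∑ j, (S i₀ j : ℂ) * v j = (∑ j, (S i₀ j : ℂ)) * v i₀ := by
      rw [Finset.sum_mul]
      exact Finset.sum_congr rfl fun j _ => by rw [hvconst j]
    rw [h10]
    have h11 : ∑ j, ((S i₀ j : ℝ) : ℂ) = ((∑ j, S i₀ j : ℝ) : ℂ) := by push_cast; rfl
    rw [h11, hrow i₀, Complex.ofReal_one, one_mul]
  have h12 : μ * v i₀ = 1 * v i₀ := by
    rw [one_mul, ← hwdef, hfinal]
  exact mul_right_cancel₀ hvi₀ne h12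


lemma charpoly_eval {N : ℕ} {R : Type*} [CommRing R] (S : Matrix (Fin N) (Fin N) R) (x : R) :
    S.charpoly.eval x = (x • (1 : Matrix (Fin N) (Fin N) R) - S).det := by
  rw [Matrix.charpoly, ← Polynomial.coe_evalRingHom, RingHom.map_det]
  congr 1
  ext i j
  simp [Matrix.charmatrix_apply, Matrix.diagonal_apply, Matrix.one_apply]
  split <;> simp


/-- For a strictly positive row-stochastic matrix, 1 is an eigenvalue of algebraic
multiplicity 1 and every other eigenvalue has modulus strictly less than 1. -/
theorem stmt2 {n : ℕ} (hn : 0 < n) (S : Matrix (Fin n) (Fin n) ℝ)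
    (hpos : ∀ i j, 0 < S i j) (hrow : ∀ i, ∑ j, S i j = 1) :
    ((S.map Complex.ofReal).charpoly.rootMultiplicity 1 = 1) ∧
    (∀ μ : ℂ, (S.map Complex.ofReal).charpoly.IsRoot μ → μ ≠ 1 → ‖μ‖ < 1) := by
  constructor
  · -- multiplicity over ℝ first
    have hp0 : S.charpoly ≠ 0 := (Matrix.charpoly_monic S).ne_zero
    have hroot : S.charpoly.IsRoot 1 := by
      show S.charpoly.eval 1 = 0
      rw [charpoly_eval, one_smul]
      apply Matrix.exists_mulVec_eq_zero_iff.mp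
      refine ⟨fun _ => 1, ?_, ?_⟩
      · intro h
        have := congrFun h ⟨0, hn⟩
        simp at this
      · funext k
        simp only [Matrix.mulVec, dotProduct, Matrix.sub_apply, Matrix.one_apply, mul_one,
          Pi.zero_apply]
        rw [Finset.sum_sub_distrib]
        simp [hrow k]
    have hm1 : 1 ≤ S.charpoly.rootMultiplicity 1 :=
      (Polynomial.rootMultiplicity_pos hp0).mpr hroot
    have hderiv_ne : (Polynomial.derivative S.charpoly).eval 1 ≠ 0 := by
      rw [deriv_charpoly_eval]
      have : (0:ℝ) < ∑ i, ((1 - S).updateRow i (Pi.single i 1)).det := by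
        apply Finset.sum_pos (fun i _ => det_minor_pos S hpos hrow i)
        exact ⟨⟨0, hn⟩, Finset.mem_univ _⟩
      exact this.ne'
    have hm2 : S.charpoly.rootMultiplicity 1 < 2 := by
      by_contra hge
      push_neg at hge
      have hdvd : (X - C (1:ℝ)) ^ 2 ∣ S.charpoly :=
        dvd_trans (pow_dvd_pow _ hge) (Polynomial.pow_rootMultiplicity_dvd _ 1)
      obtain ⟨q, hq⟩ := hdvd
      apply hderiv_ne
      rw [hq]
      simp [derivative_mul, derivative_pow]
    have hmultR : S.charpoly.rootMultiplicity 1 = 1 := by omega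
    have hcmap : (S.map Complex.ofReal).charpoly
        = Polynomial.map Complex.ofRealHom S.charpoly :=
      Matrix.charpoly_map S Complex.ofRealHom
    rw [hcmap]
    rw [show (1:ℂ) = Complex.ofRealHom 1 by simp]
    rw [← Polynomial.eq_rootMultiplicity_map Complex.ofReal_injective 1]
    exact hmultR
  · intro μ hroot hμne
    have hdet : (μ • (1 : Matrix (Fin n) (Fin n) ℂ) - S.map Complex.ofReal).det = 0 := by
      rw [← charpoly_eval]
      exact hroot
    obtain ⟨v, hv, hveq⟩ := Matrix.exists_mulVec_eq_zero_iff.mpr hdet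
    have heig : (S.map Complex.ofReal) *ᵥ v = μ • v := by
      have h1 : (μ • (1 : Matrix (Fin n) (Fin n) ℂ)) *ᵥ v - (S.map Complex.ofReal) *ᵥ v = 0 := by
        rw [← Matrix.sub_mulVec]
        exact hveq
      have h2 : (μ • (1 : Matrix (Fin n) (Fin n) ℂ)) *ᵥ v = μ • v := by
        rw [Matrix.smul_mulVec, Matrix.one_mulVec]
      rw [h2] at h1
      exact (sub_eq_zero.mp h1).symm
    obtain ⟨hle, himp⟩ := eigen_bound S hpos hrow μ v hv heig
    exact lt_of_le_of_ne hle (fun h => hμne (himp h))
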